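/- If φ is an optimal (minimum-cost) specialization function with range X ∪ {n} where n ∉ X, then the normalized specialization function φ_X^n achieves the same cost: cost(φ) = cost(φ_X^n). -/
import Mathlib


/-- The normalized specialization function `φ_X^n`. -/
noncomputable def normSpec (n : ℕ) (X : Finset ℕ) (i : ℕ) : ℕ :=
  sInf {x : ℕ | x ∈ insert n X ∧ i ≤ x}

/-- Cost of a specialization function. -/
def cost (n : ℕ) (s f φ : ℕ → ℕ) : ℕ :=
  ∑ i ∈ Finset.Icc 1 n, s (φ i) * f i

/-- `φ` is a specialization function with parameters `n`, `k` and range set `Y`. -/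
def IsSpecFun (n k : ℕ) (φ : ℕ → ℕ) (Y : Finset ℕ) : Prop :=
  Y ⊆ Finset.Icc 1 n ∧ Y.card = k ∧
  (∀ i ∈ Finset.Icc 1 n, φ i ∈ Y) ∧
  (∀ x ∈ Y, ∃ i ∈ Finset.Icc 1 n, φ i = x) ∧
  (∀ i ∈ Finset.Icc 1 n, i ≤ φ i)

/-- If `φ` is an optimal (minimum-cost) specialization function with range
`X ∪ {n}` where `n ∉ X`, then the normalized specialization function `φ_X^n`
achieves the same cost. -/
theorem cost_eq_cost_normSpec_of_optimal (n k : ℕ) (hn : 1 ≤ n)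
    (s f : ℕ → ℕ)
    (hs : ∀ i ∈ Finset.Icc 1 n, ∀ j ∈ Finset.Icc 1 n, i ≤ j → s i ≤ s j)
    (X : Finset ℕ) (hnX : n ∉ X)
    (φ : ℕ → ℕ) (hφ : IsSpecFun n k φ (insert n X))
    (hopt : ∀ (ψ : ℕ → ℕ) (Y : Finset ℕ), IsSpecFun n k ψ Y →
      cost n s f φ ≤ cost n s f ψ) :
    cost n s f φ = cost n s f (normSpec n X) := by
  obtain ⟨hYsub, hYcard, hmem, hsurj, hle⟩ := hφ
  have hnY : n ∈ insert n X := Finset.mem_insert_self _ _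
  have key : ∀ i ∈ Finset.Icc 1 n,
      normSpec n X i ∈ insert n X ∧ i ≤ normSpec n X i ∧ normSpec n X i ≤ φ i := by
    intro i hi
    have hiIcc := Finset.mem_Icc.mp hi
    have hne : (n : ℕ) ∈ {x : ℕ | x ∈ insert n X ∧ i ≤ x} := ⟨hnY, hiIcc.2⟩
    have hmem' := Nat.sInf_mem (Set.nonempty_of_mem hne)
    exact ⟨hmem'.1, hmem'.2, Nat.sInf_le ⟨hmem i hi, hle i hi⟩⟩
  have hspec : IsSpecFun n k (normSpec n X) (insert n X) := by
    refine ⟨hYsub, hYcard, fun i hi => (key i hi).1, ?_, fun i hi => (key i hi).2.1⟩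
    intro x hx
    have hxIcc := hYsub hx
    have h1 : normSpec n X x ≤ x := Nat.sInf_le ⟨hx, le_refl x⟩
    exact ⟨x, hxIcc, le_antisymm h1 (key x hxIcc).2.1⟩
  have hle' : cost n s f (normSpec n X) ≤ cost n s f φ :=
    Finset.sum_le_sum fun i hi =>
      Nat.mul_le_mul_right _
        (hs _ (hYsub (key i hi).1) _ (hYsub (hmem i hi)) (key i hi).2.2)
  exact le_antisymm (hopt _ _ hspec) hle'
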